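/- arXiv:1502.00063 — 2 statements merged into one kernel-verified Lean document; each statement's English description precedes it below -/
import Mathlib

section
/- Let (a_n)_{n=0}^∞ be a Leja sequence on the unit circle S¹. Then for every integer N ≥ 1, (E_0(α_N) + N log N)/N = (E_0(α_{2N}) + 2N log(2N))/(2N). -/
open Filter Topology

/-- Logarithmic energy of the first `N` points of the sequence `a`. -/
noncomputable def logEnergy (a : ℕ → ℂ) (N : ℕ) : ℝ :=
  ∑ i ∈ Finset.range N, ∑ j ∈ Finset.range N,
    if i ≠ j then Real.log (1 / ‖a i - a j‖) else 0

/-- `a` is a Leja sequence on the unit circle: all points lie on the circle and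
`a (n+1)` maximizes `∏_{i=0}^{n} |z - a i|` over the circle. -/
def IsLejaSeq (a : ℕ → ℂ) : Prop :=
  (∀ n, ‖a n‖ = 1) ∧
  ∀ n : ℕ, ∀ z : ℂ, ‖z‖ = 1 →
    ∏ i ∈ Finset.range (n + 1), ‖z - a i‖ ≤
      ∏ i ∈ Finset.range (n + 1), ‖a (n + 1) - a i‖


/-- binary digit sum -/
def ds (n : ℕ) : ℕ := (Nat.digits 2 n).sum

lemma ds_zero : ds 0 = 0 := by simp [ds]

lemma ds_one : ds 1 = 1 := by simp [ds]

lemma ds_two_mul (k : ℕ) : ds (2 * k) = ds k := by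
  rcases Nat.eq_zero_or_pos k with h | h
  · simp [h]
  · unfold ds
    rw [Nat.digits_def' (by norm_num : 1 < 2) (by omega)]
    simp [Nat.mul_div_cancel_left, Nat.mul_mod_right]

lemma ds_two_mul_add_one (k : ℕ) : ds (2 * k + 1) = ds k + 1 := by
  unfold ds
  rw [Nat.digits_def' (by norm_num : 1 < 2) (by omega)]
  have h1 : (2 * k + 1) % 2 = 1 := by omega
  have h2 : (2 * k + 1) / 2 = k := by omega
  rw [h1, h2]
  simp [Nat.add_comm]

lemma ds_pow2 (k : ℕ) : ds (2 ^ k) = 1 := by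
  induction k with
  | zero => exact ds_one
  | succ k ih => rw [pow_succ, mul_comm, ds_two_mul]; exact ih

lemma ds_pow2_add (k q : ℕ) (hq : q < 2 ^ k) : ds (2 ^ k + q) = ds q + 1 := by
  induction k generalizing q with
  | zero => interval_cases q; simp [ds]
  | succ k ih =>
    rcases Nat.even_or_odd q with ⟨r, hr⟩ | ⟨r, hr⟩
    · subst hr
      have h : 2 ^ (k+1) + (r + r) = 2 * (2 ^ k + r) := by ring
      have h2 : r + r = 2 * r := by ring
      rw [h, ds_two_mul, ih r (by omega), h2, ds_two_mul]
    · subst hr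
      have h : 2 ^ (k+1) + (2 * r + 1) = 2 * (2 ^ k + r) + 1 := by ring
      rw [h, ds_two_mul_add_one, ih r (by omega), ds_two_mul_add_one]


/-- Admissible next points after the first `m` points of a structured sequence. -/
def Adm (b : ℕ → ℂ) (m : ℕ) : Set ℂ :=
  if m = 0 then Set.univ
  else if m = 2 ^ Nat.log 2 m then {z | z ^ 2 ^ Nat.log 2 m = -(b 0) ^ 2 ^ Nat.log 2 m}
  else Adm (fun i => b (2 ^ Nat.log 2 m + i)) (m - 2 ^ Nat.log 2 m)
termination_by m
decreasing_by
  have : 0 < 2 ^ Nat.log 2 m := by positivity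
  omega

lemma Adm_zero (b : ℕ → ℂ) : Adm b 0 = Set.univ := by rw [Adm]; simp

lemma Adm_pow2 (b : ℕ → ℂ) (k : ℕ) :
    Adm b (2 ^ k) = {z | z ^ 2 ^ k = -(b 0) ^ 2 ^ k} := by
  rw [Adm]
  have h0 : (2:ℕ) ^ k ≠ 0 := by positivity
  rw [if_neg h0]
  rw [Nat.log_pow (by norm_num : 1 < 2)]
  simp

lemma log2_eq {k m : ℕ} (h1 : 2 ^ k ≤ m) (h2 : m < 2 ^ (k + 1)) : Nat.log 2 m = k :=
  Nat.log_eq_of_pow_le_of_lt_pow h1 h2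

lemma Adm_rec (b : ℕ → ℂ) {k m : ℕ} (h1 : 2 ^ k < m) (h2 : m < 2 ^ (k + 1)) :
    Adm b m = Adm (fun i => b (2 ^ k + i)) (m - 2 ^ k) := by
  have hl : Nat.log 2 m = k := log2_eq (le_of_lt h1) h2
  rw [Adm, if_neg (by omega), hl, if_neg (by omega)]

/-- the first `m` points are a structured (greedy-admissible) configuration -/
def Struct (b : ℕ → ℂ) (m : ℕ) : Prop := ∀ j < m, b j ∈ Adm b j

lemma Struct.mono {b : ℕ → ℂ} {m m' : ℕ} (h : Struct b m) (hm : m' ≤ m) : Struct b m' :=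
  fun j hj => h j (lt_of_lt_of_le hj hm)

lemma Struct.shift {b : ℕ → ℂ} {k m : ℕ} (h : Struct b m) (h1 : 2 ^ k < m)
    (h2 : m ≤ 2 ^ (k + 1)) : Struct (fun i => b (2 ^ k + i)) (m - 2 ^ k) := by
  intro j hj
  rcases Nat.eq_zero_or_pos j with rfl | hjpos
  · rw [Adm_zero]; trivial
  · have hlt : 2 ^ k + j < 2 ^ (k + 1) := by
      have : j < 2 ^ k := by
        have := pow_succ 2 k; omega
      omega
    have := h (2 ^ k + j) (by omega)
    rwa [Adm_rec b (by omega : 2 ^ k < 2 ^ k + j) hlt, Nat.add_sub_cancel_left] at this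



-- helper: z^(2^k) = c, k < t, then z^(2^t) = (-c)^(2^t / 2^k)... we do it concretely
lemma pow_pow_helper {z c : ℂ} {k t : ℕ} (h : z ^ 2 ^ k = -c ^ 2 ^ k) (hkt : k < t) :
    z ^ 2 ^ t = c ^ 2 ^ t := by
  have he : 2 ^ t = 2 ^ k * 2 ^ (t - k) := by
    rw [← pow_add]; congr 1; omega
  have heven : Even (2 ^ (t - k)) := by
    have : t - k ≠ 0 := by omega
    exact (Nat.even_pow).2 ⟨even_two, this⟩
  rw [he, pow_mul, pow_mul, h, heven.neg_pow]

/-- points admissible after a structured configuration have controlled powers -/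
lemma adm_pow : ∀ m, ∀ b : ℕ → ℂ, ∀ z : ℂ, 1 ≤ m → Struct b m → z ∈ Adm b m →
    ∀ t, m < 2 ^ t → z ^ 2 ^ t = (b 0) ^ 2 ^ t := by
  intro m
  induction m using Nat.strong_induction_on with
  | _ m ih =>
    intro b z hm hs hz t ht
    set k := Nat.log 2 m with hk
    have hkle : 2 ^ k ≤ m := Nat.pow_log_le_self 2 (by omega)
    have hklt : m < 2 ^ (k + 1) := Nat.lt_pow_succ_log_self (by norm_num) m
    by_cases hpow : m = 2 ^ k
    · rw [hpow, Adm_pow2] at hz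
      have hkt : k < t := by
        by_contra h
        have : 2 ^ t ≤ 2 ^ k := Nat.pow_le_pow_right (by norm_num) (by omega)
        omega
      exact pow_pow_helper hz hkt
    · have h1 : 2 ^ k < m := by omega
      set q := m - 2 ^ k with hq
      have hq1 : 1 ≤ q := by omega
      have hq2 : q < 2 ^ k := by
        have := pow_succ 2 k; omega
      rw [Adm_rec b h1 hklt] at hz
      have hs' : Struct (fun i => b (2 ^ k + i)) q := hs.shift h1 (le_of_lt hklt)
      -- z ^ 2^k = (b (2^k)) ^ 2^k
      have hz2 : z ^ 2 ^ k = (b (2 ^ k)) ^ 2 ^ k := by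
        have := ih q (by omega) _ z hq1 hs' hz k hq2
        simpa using this
      -- (b (2^k)) ^ 2^k = -(b 0)^2^k
      have hb2 : (b (2 ^ k)) ^ 2 ^ k = -(b 0) ^ 2 ^ k := by
        have := hs (2 ^ k) h1
        rwa [Adm_pow2] at this
      have hkt : k < t := by
        by_contra h
        have : 2 ^ t ≤ 2 ^ k := Nat.pow_le_pow_right (by norm_num) (by omega)
        omega
      exact pow_pow_helper (hz2.trans hb2) hkt

lemma adm_nonempty : ∀ m, ∀ b : ℕ → ℂ, (Adm b m).Nonempty := by
  intro m
  induction m using Nat.strong_induction_on with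
  | _ m ih =>
    intro b
    rcases Nat.eq_zero_or_pos m with rfl | hm
    · rw [Adm_zero]; exact ⟨0, trivial⟩
    set k := Nat.log 2 m with hk
    have hkle : 2 ^ k ≤ m := Nat.pow_log_le_self 2 (by omega)
    have hklt : m < 2 ^ (k + 1) := Nat.lt_pow_succ_log_self (by norm_num) m
    by_cases hpow : m = 2 ^ k
    · rw [hpow, Adm_pow2]
      obtain ⟨z, hz⟩ := IsAlgClosed.exists_pow_nat_eq (-(b 0) ^ 2 ^ k) (n := 2 ^ k)
        (by positivity)
      exact ⟨z, hz⟩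
    · rw [Adm_rec b (by omega) hklt]
      exact ih (m - 2 ^ k) (by have : 0 < 2 ^ k := Nat.pow_pos (by norm_num : 0 < 2); omega) _

lemma adm_norm {b : ℕ → ℂ} {m : ℕ} {z : ℂ} (hm : 1 ≤ m) (hs : Struct b m)
    (hb : ∀ i, ‖b i‖ = 1) (hz : z ∈ Adm b m) : ‖z‖ = 1 := by
  have ht : m < 2 ^ m := Nat.lt_two_pow_self
  have := adm_pow m b z hm hs hz m ht
  have habs : ‖z‖ ^ 2 ^ m = 1 := by
    have := congrArg norm this
    rw [norm_pow, norm_pow, hb 0, one_pow] at this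
    exact this
  rcases lt_trichotomy (‖z‖) 1 with h | h | h
  · have := pow_lt_one₀ (norm_nonneg z) h (by positivity : (2:ℕ)^m ≠ 0)
    linarith
  · exact h
  · have := one_lt_pow₀ h (by positivity : (2:ℕ)^m ≠ 0)
    linarith


/-- triangle bound for unimodular points -/
lemma abs_sub_le_two {u w : ℂ} (hu : ‖u‖ = 1) (hw : ‖w‖ = 1) :
    ‖u - w‖ ≤ 2 := by
  calc ‖u - w‖ ≤ ‖u‖ + ‖w‖ := by
        simpa [sub_eq_add_neg] using norm_add_le u (-w)
    _ = 2 := by rw [hu, hw]; norm_num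

lemma abs_sub_eq_two_iff {u w : ℂ} (hu : ‖u‖ = 1) (hw : ‖w‖ = 1) :
    ‖u - w‖ = 2 ↔ u = -w := by
  constructor
  · intro h
    have hns : Complex.normSq (u - w) = 4 := by
      have := congrArg (fun x : ℝ => x ^ 2) h
      have h4 : (2:ℝ)^2 = 4 := by norm_num
      simpa [Complex.sq_norm, h4] using this
    have hnu : Complex.normSq u = 1 := by
      have : ‖u‖ ^ 2 = 1 := by rw [hu]; norm_num
      rwa [Complex.sq_norm] at this
    have hnw : Complex.normSq w = 1 := by
      have : ‖w‖ ^ 2 = 1 := by rw [hw]; norm_num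
      rwa [Complex.sq_norm] at this
    have hre : (u * starRingEnd ℂ w).re = -1 := by
      have hexp := Complex.normSq_sub u w
      rw [hns, hnu, hnw] at hexp
      linarith
    -- |u * conj w| = 1 and re = -1 → u * conj w = -1
    have habs : Complex.normSq (u * starRingEnd ℂ w) = 1 := by
      rw [Complex.normSq_mul, hnu, Complex.normSq_conj, hnw]; norm_num
    have him : (u * starRingEnd ℂ w).im = 0 := by
      have := Complex.normSq_apply (u * starRingEnd ℂ w)
      nlinarith [this, hre, habs]
    have key : u * starRingEnd ℂ w = -1 := by
      apply Complex.ext <;> simp [hre, him]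
    have : u * (starRingEnd ℂ w * w) = -w := by
      rw [← mul_assoc, key]; ring
    rw [Complex.conj_mul'] at this
    rw [hw] at this
    simpa using this
  · rintro rfl
    rw [show -w - w = -(2 * w) by ring, norm_neg, norm_mul]
    simp [hw]

/-- product formula over a full power-of-two structured block -/
lemma prod_pow2 : ∀ k, ∀ b : ℕ → ℂ, Struct b (2 ^ k) → ∀ z : ℂ,
    ∏ i ∈ Finset.range (2 ^ k), ‖z - b i‖
      = ‖z ^ 2 ^ k - (b 0) ^ 2 ^ k‖ := by
  intro k
  induction k with
  | zero => intro b _ z; simp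
  | succ k ih =>
    intro b hs z
    have hsplit : (2:ℕ) ^ (k+1) = 2 ^ k + 2 ^ k := by rw [pow_succ]; ring
    have hp0 : 0 < 2 ^ k := by positivity
    rw [hsplit, Finset.prod_range_add]
    have h1 : Struct b (2 ^ k) := hs.mono (by omega)
    have h2 : Struct (fun i => b (2 ^ k + i)) (2 ^ k) := by
      have := hs.shift (k := k) (by omega) (le_refl _)
      have he : 2 ^ (k+1) - 2 ^ k = 2 ^ k := by omega
      rwa [he] at this
    rw [ih b h1 z, ih _ h2 z]
    have hb2 : (b (2 ^ k)) ^ 2 ^ k = -(b 0) ^ 2 ^ k := by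
      have := hs (2 ^ k) (by omega)
      rwa [Adm_pow2] at this
    rw [show (2:ℕ) ^ k + 0 = 2 ^ k by omega, hb2, ← norm_mul]
    congr 1
    have he2 : (2:ℕ) ^ k + 2 ^ k = 2 ^ k * 2 := by ring
    rw [he2, pow_mul, pow_mul]
    ring

/-- The main theorem: max value of the product, with equality characterization. -/
lemma main_bound : ∀ m, ∀ b : ℕ → ℂ, (∀ i, ‖b i‖ = 1) → Struct b m →
    ∀ z : ℂ, ‖z‖ = 1 →
      (∏ i ∈ Finset.range m, ‖z - b i‖ ≤ 2 ^ ds m) ∧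
      (∏ i ∈ Finset.range m, ‖z - b i‖ = 2 ^ ds m ↔ z ∈ Adm b m) := by
  intro m
  induction m using Nat.strong_induction_on with
  | _ m ih =>
    intro b hb hs z hz
    rcases Nat.eq_zero_or_pos m with rfl | hm
    · rw [ds_zero, Adm_zero]
      simp
    set k := Nat.log 2 m with hk
    have hkle : 2 ^ k ≤ m := Nat.pow_log_le_self 2 (by omega)
    have hklt : m < 2 ^ (k + 1) := Nat.lt_pow_succ_log_self (by norm_num) m
    have habsz : ‖z ^ 2 ^ k‖ = 1 := by rw [norm_pow, hz, one_pow]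
    have habsb : ‖(b 0) ^ 2 ^ k‖ = 1 := by rw [norm_pow, hb 0, one_pow]
    by_cases hpow : m = 2 ^ k
    · rw [hpow, prod_pow2 k b (by rw [← hpow]; exact hs) z, Adm_pow2, ds_pow2]
      constructor
      · simpa using abs_sub_le_two habsz habsb
      · rw [show ((2:ℝ)^1 = 2) by norm_num]
        rw [abs_sub_eq_two_iff habsz habsb]
        exact Iff.rfl
    · have h1 : 2 ^ k < m := by omega
      set q := m - 2 ^ k with hq
      have hq1 : 1 ≤ q := by omega
      have hq2 : q < 2 ^ k := by have := pow_succ 2 k; omega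
      have hmeq : m = 2 ^ k + q := by omega
      set b' : ℕ → ℂ := fun i => b (2 ^ k + i) with hb'
      have hs' : Struct b' q := hs.shift h1 (le_of_lt hklt)
      have hb'1 : ∀ i, ‖b' i‖ = 1 := fun i => hb _
      have hsk : Struct b (2 ^ k) := hs.mono hkle
      have hbk : (b (2 ^ k)) ^ 2 ^ k = -(b 0) ^ 2 ^ k := by
        have := hs (2 ^ k) h1
        rwa [Adm_pow2] at this
      have hds : ds m = ds q + 1 := by rw [hmeq]; exact ds_pow2_add k q hq2
      have hAdm : Adm b m = Adm b' q := Adm_rec b h1 hklt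
      obtain ⟨ihle, ihiff⟩ := ih q (by omega) b' hb'1 hs' z hz
      have hsplitprod : ∏ i ∈ Finset.range m, ‖z - b i‖
          = ‖z ^ 2 ^ k - (b 0) ^ 2 ^ k‖
            * ∏ i ∈ Finset.range q, ‖z - b' i‖ := by
        rw [hmeq, Finset.prod_range_add, prod_pow2 k b hsk z]
      have hA_le : ‖z ^ 2 ^ k - (b 0) ^ 2 ^ k‖ ≤ 2 :=
        abs_sub_le_two habsz habsb
      have hQ_nonneg : (0:ℝ) ≤ ∏ i ∈ Finset.range q, ‖z - b' i‖ :=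
        Finset.prod_nonneg fun i _ => norm_nonneg _
      have hA_nonneg : (0:ℝ) ≤ ‖z ^ 2 ^ k - (b 0) ^ 2 ^ k‖ :=
        norm_nonneg _
      have hpowpos : (0:ℝ) < 2 ^ ds q := by positivity
      constructor
      · rw [hsplitprod, hds, pow_succ]
        calc ‖z ^ 2 ^ k - (b 0) ^ 2 ^ k‖
              * ∏ i ∈ Finset.range q, ‖z - b' i‖
            ≤ 2 * 2 ^ ds q := by
              apply mul_le_mul hA_le ihle hQ_nonneg (by norm_num)
          _ = 2 ^ ds q * 2 := by ring
      · constructor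
        · intro heq
          rw [hsplitprod, hds] at heq
          -- deduce both factors are maximal
          have hQle := ihle
          have hQpos : (0:ℝ) < ∏ i ∈ Finset.range q, ‖z - b' i‖ := by
            rcases lt_or_eq_of_le hQ_nonneg with h | h
            · exact h
            · exfalso
              rw [← h, mul_zero] at heq
              have : (0:ℝ) < 2 ^ (ds q + 1) := by positivity
              linarith
          have hQeq : ∏ i ∈ Finset.range q, ‖z - b' i‖ = 2 ^ ds q := by
            by_contra hne
            have hQlt : ∏ i ∈ Finset.range q, ‖z - b' i‖ < 2 ^ ds q :=
              lt_of_le_of_ne hQle hne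
            have : ‖z ^ 2 ^ k - (b 0) ^ 2 ^ k‖
                * ∏ i ∈ Finset.range q, ‖z - b' i‖ < 2 * 2 ^ ds q := by
              rcases eq_or_lt_of_le hA_nonneg with h0 | h0
              · rw [← h0, zero_mul]; positivity
              · exact mul_lt_mul' hA_le hQlt (le_of_lt hQpos) (by linarith) |>.trans_le (le_refl _)
            rw [pow_succ] at heq
            nlinarith
          rw [hAdm, ← ihiff]
          exact hQeq
        · intro hzadm
          rw [hAdm] at hzadm
          have hQeq : ∏ i ∈ Finset.range q, ‖z - b' i‖ = 2 ^ ds q :=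
            ihiff.mpr hzadm
          have hzpow : z ^ 2 ^ k = -(b 0) ^ 2 ^ k := by
            have h' := adm_pow q b' z hq1 hs' hzadm k hq2
            have : (b' 0) ^ 2 ^ k = -(b 0) ^ 2 ^ k := by
              simpa [hb'] using hbk
            rw [h', this]
          rw [hsplitprod, hQeq, hzpow, hds, pow_succ]
          rw [show -(b 0) ^ 2 ^ k - (b 0) ^ 2 ^ k = -(2 * (b 0) ^ 2 ^ k) by ring]
          rw [norm_neg, norm_mul, habsb]
          norm_num
          ring




section Leja
variable {a : ℕ → ℂ} (ha : IsLejaSeq a)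

lemma leja_struct (ha : IsLejaSeq a) : ∀ m, Struct a m := by
  intro m
  induction m with
  | zero => intro j hj; omega
  | succ m ihm =>
    intro j hj
    rcases Nat.lt_or_ge j m with h | h
    · exact ihm j h
    have hjm : j = m := by omega
    subst hjm
    rcases Nat.eq_zero_or_pos j with rfl | hj1
    · rw [Adm_zero]; trivial
    -- j ≥ 1 : use maximality
    obtain ⟨zs, hzs⟩ := adm_nonempty j a
    have hzs1 : ‖zs‖ = 1 := adm_norm hj1 ihm ha.1 hzs
    have hmax := ha.2 (j - 1) zs hzs1
    rw [show j - 1 + 1 = j by omega] at hmax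
    obtain ⟨hle, hiff⟩ := main_bound j a ha.1 ihm (a j) (ha.1 j)
    obtain ⟨_, hiffz⟩ := main_bound j a ha.1 ihm zs hzs1
    have hzeq : ∏ i ∈ Finset.range j, ‖zs - a i‖ = 2 ^ ds j := hiffz.mpr hzs
    rw [hzeq] at hmax
    exact hiff.mp (le_antisymm hle hmax)

lemma leja_prod (ha : IsLejaSeq a) (m : ℕ) :
    ∏ i ∈ Finset.range m, ‖a m - a i‖ = 2 ^ ds m := by
  obtain ⟨_, hiff⟩ := main_bound m a ha.1 (leja_struct ha m) (a m) (ha.1 m)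
  exact hiff.mpr (leja_struct ha (m + 1) m (by omega))

lemma leja_log_prod (ha : IsLejaSeq a) (m : ℕ) :
    ∑ i ∈ Finset.range m, Real.log (‖a m - a i‖) = (ds m : ℝ) * Real.log 2 := by
  have hprod := leja_prod ha m
  have hne : ∀ i ∈ Finset.range m, ‖a m - a i‖ ≠ 0 := by
    intro i hi
    intro h0
    rw [Finset.prod_eq_zero hi h0] at hprod
    have : (0:ℝ) < 2 ^ ds m := by positivity
    linarith
  rw [← Real.log_prod hne, hprod, Real.log_pow]

lemma logEnergy_eq (ha : IsLejaSeq a) (N : ℕ) :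
    logEnergy a N = -2 * Real.log 2 * ∑ n ∈ Finset.range N, (ds n : ℝ) := by
  induction N with
  | zero => simp [logEnergy]
  | succ N ihN =>
    have hsym : ∀ i j : ℕ, (if i ≠ j then Real.log (1 / ‖a i - a j‖) else 0)
        = (if j ≠ i then Real.log (1 / ‖a j - a i‖) else 0) := by
      intro i j
      rcases eq_or_ne i j with rfl | h
      · simp
      · rw [if_pos h, if_pos h.symm, norm_sub_rev]
    have step : logEnergy a (N + 1) = logEnergy a N
        + 2 * ∑ j ∈ Finset.range N, Real.log (1 / ‖a N - a j‖) := by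
      unfold logEnergy
      rw [Finset.sum_range_succ]
      have inner : ∀ i, ∑ j ∈ Finset.range (N+1),
          (if i ≠ j then Real.log (1 / ‖a i - a j‖) else 0)
          = (∑ j ∈ Finset.range N, (if i ≠ j then Real.log (1 / ‖a i - a j‖) else 0))
            + (if i ≠ N then Real.log (1 / ‖a i - a N‖) else 0) := by
        intro i; rw [Finset.sum_range_succ]
      rw [Finset.sum_congr rfl (fun i _ => inner i), Finset.sum_add_distrib, inner N]
      have hNN : (if N ≠ N then Real.log (1 / ‖a N - a N‖) else 0) = 0 := by simp
      rw [hNN, add_zero]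
      have hlast : ∑ j ∈ Finset.range N,
          (if N ≠ j then Real.log (1 / ‖a N - a j‖) else 0)
          = ∑ j ∈ Finset.range N, Real.log (1 / ‖a N - a j‖) := by
        apply Finset.sum_congr rfl
        intro j hj
        have : N ≠ j := by simp at hj; omega
        rw [if_pos this]
      have hcol : ∑ i ∈ Finset.range N,
          (if i ≠ N then Real.log (1 / ‖a i - a N‖) else 0)
          = ∑ j ∈ Finset.range N, Real.log (1 / ‖a N - a j‖) := by
        apply Finset.sum_congr rfl
        intro i hi
        have hiN : i ≠ N := by simp at hi; omega
        rw [if_pos hiN, one_div, one_div, norm_sub_rev]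
      rw [hlast, hcol]
      ring
    have hlog : ∑ j ∈ Finset.range N, Real.log (1 / ‖a N - a j‖)
        = -((ds N : ℝ) * Real.log 2) := by
      rw [← leja_log_prod ha N, ← Finset.sum_neg_distrib]
      apply Finset.sum_congr rfl
      intro j _
      rw [one_div, Real.log_inv]
    rw [step, ihN, hlog, Finset.sum_range_succ]
    ring

end Leja

lemma ds_sum_double (N : ℕ) :
    ∑ n ∈ Finset.range (2 * N), (ds n : ℝ)
      = 2 * (∑ n ∈ Finset.range N, (ds n : ℝ)) + N := by
  induction N with
  | zero => simp
  | succ N ih =>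
    have h2 : 2 * (N + 1) = (2 * N + 1) + 1 := by ring
    rw [h2, Finset.sum_range_succ, Finset.sum_range_succ, ih, Finset.sum_range_succ]
    rw [ds_two_mul, ds_two_mul_add_one]
    push_cast
    ring

theorem leja_logEnergy_doubling (a : ℕ → ℂ) (ha : IsLejaSeq a) (N : ℕ) (hN : 1 ≤ N) :
    (logEnergy a N + (N : ℝ) * Real.log N) / (N : ℝ)
      = (logEnergy a (2 * N) + ((2 * N : ℕ) : ℝ) * Real.log ((2 * N : ℕ) : ℝ))
          / ((2 * N : ℕ) : ℝ) := by
  have hN0 : (N : ℝ) ≠ 0 := by positivity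
  rw [logEnergy_eq ha N, logEnergy_eq ha (2 * N), ds_sum_double N]
  have hcast : ((2 * N : ℕ) : ℝ) = 2 * (N : ℝ) := by push_cast; ring
  rw [hcast]
  rw [Real.log_mul (by norm_num) hN0]
  field_simp
  ring
end

section
/- Let (a_n)_{n=0}^∞ be a Leja sequence on the unit circle S¹. Then for every integer N ≥ 2, E_0(α_N) = −2 log 2 · Σ_{k=1}^{N−1} τ(k). -/
open Filter Topology

/-- τ(k): the number of ones in the binary representation of k. -/
def tau (k : ℕ) : ℕ := (Nat.digits 2 k).sum

/-! ### Auxiliary lemmas -/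

/-- A rational parametrization of (part of) the unit circle, injective on ℝ. -/
noncomputable def circParam (t : ℝ) : ℂ := (1 + t * Complex.I) / (1 - t * Complex.I)

lemma circParam_abs (t : ℝ) : ‖circParam t‖ = 1 := by
  have h1 : Complex.normSq (1 + t * Complex.I) = 1 + t * t := by
    simp [Complex.normSq_apply]
  have h2 : Complex.normSq (1 - t * Complex.I) = 1 + t * t := by
    simp [Complex.normSq_apply]
  have hd : (1 - (t : ℂ) * Complex.I) ≠ 0 := by
    intro h
    have := congrArg Complex.normSq h
    rw [h2] at this
    simp at this
    nlinarith [this]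
  rw [circParam, norm_div]
  rw [Complex.norm_def, Complex.norm_def, h1, h2]
  rw [div_self (Real.sqrt_ne_zero'.mpr (by nlinarith))]

lemma circParam_injective : Function.Injective circParam := by
  intro s t h
  have hds : (1 - (s : ℂ) * Complex.I) ≠ 0 := by
    intro hh
    have := circParam_abs s
    rw [circParam, hh, div_zero] at this
    simp at this
  have hdt : (1 - (t : ℂ) * Complex.I) ≠ 0 := by
    intro hh
    have := circParam_abs t
    rw [circParam, hh, div_zero] at this
    simp at this
  rw [circParam, circParam, div_eq_div_iff hds hdt] at h
  have h2 : (2 : ℂ) * s * Complex.I = 2 * t * Complex.I := by ring_nf at h ⊢; linear_combination h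
  have h3 : (s : ℂ) = t := by
    have hI : (Complex.I : ℂ) ≠ 0 := Complex.I_ne_zero
    field_simp at h2
    exact_mod_cast h2
  exact_mod_cast h3

/-- One can always find a point on the circle avoiding a finite set. -/
lemma exists_circle_avoid (s : Finset ℂ) : ∃ z : ℂ, ‖z‖ = 1 ∧ z ∉ s := by
  obtain ⟨z, hz, hzs⟩ :=
    (Set.infinite_range_of_injective circParam_injective).exists_notMem_finset s
  obtain ⟨t, rfl⟩ := hz
  exact ⟨circParam t, circParam_abs t, hzs⟩

/-- Two points on the unit circle at distance 2 are antipodal. -/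
lemma eq_neg_of_abs_sub_eq_two {x y : ℂ} (hx : ‖x‖ = 1) (hy : ‖y‖ = 1)
    (h : ‖x - y‖ = 2) : y = -x := by
  have hns : Complex.normSq (x - y) = 4 := by
    rw [← Complex.sq_norm, h]; norm_num
  have hnx : Complex.normSq x = 1 := by rw [← Complex.sq_norm, hx]; norm_num
  have hny : Complex.normSq y = 1 := by rw [← Complex.sq_norm, hy]; norm_num
  rw [Complex.normSq_sub, hnx, hny] at hns
  have hre : (x * (starRingEnd ℂ) y).re = -1 := by linarith
  have habs : ‖x * (starRingEnd ℂ) y‖ = 1 := by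
    rw [norm_mul, Complex.norm_conj, hx, hy]; norm_num
  have hn2 : Complex.normSq (x * (starRingEnd ℂ) y) = 1 := by
    rw [← Complex.sq_norm, habs]; norm_num
  have him : (x * (starRingEnd ℂ) y).im = 0 := by
    have := Complex.normSq_apply (x * (starRingEnd ℂ) y)
    rw [hn2, hre] at this
    nlinarith [this]
  have huv : x * (starRingEnd ℂ) y = -1 := by
    apply Complex.ext <;> simp [hre, him]
  have hyy : (starRingEnd ℂ) y * y = 1 := by
    rw [mul_comm, Complex.mul_conj, hny]; norm_num
  have : x = -y := by
    calc x = x * ((starRingEnd ℂ) y * y) := by rw [hyy, mul_one]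
    _ = (x * (starRingEnd ℂ) y) * y := by ring
    _ = -y := by rw [huv]; ring
  rw [this]; ring

lemma abs_sub_le_two_s5 {x y : ℂ} (hx : ‖x‖ = 1) (hy : ‖y‖ = 1) :
    ‖x - y‖ ≤ 2 := by
  calc ‖x - y‖ ≤ ‖x‖ + ‖y‖ := by
        exact norm_sub_le x y
  _ = 2 := by rw [hx, hy]; norm_num

/-- Pairing product identity: if consecutive pairs are antipodal,
the product over `2k` points factors through squares. -/
lemma prod_pair (a : ℕ → ℂ) :
    ∀ k : ℕ, (∀ j < k, a (2 * j + 1) = -a (2 * j)) → ∀ z : ℂ,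
      ∏ i ∈ Finset.range (2 * k), ‖z - a i‖
        = ∏ j ∈ Finset.range k, ‖z ^ 2 - a (2 * j) ^ 2‖ := by
  intro k
  induction k with
  | zero => simp
  | succ k ih =>
    intro hp z
    have h2 : 2 * (k + 1) = 2 * k + 1 + 1 := by ring
    rw [h2, Finset.prod_range_succ, Finset.prod_range_succ, Finset.prod_range_succ,
      ih (fun j hj => hp j (by omega)) z, hp k (by omega), mul_assoc, ← norm_mul]
    congr 2
    ring

/-- Negation invariance of the paired product. -/
lemma prod_neg (a : ℕ → ℂ) (k : ℕ) (hp : ∀ j < k, a (2 * j + 1) = -a (2 * j)) (z : ℂ) :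
    ∏ i ∈ Finset.range (2 * k), ‖-z - a i‖
      = ∏ i ∈ Finset.range (2 * k), ‖z - a i‖ := by
  rw [prod_pair a k hp, prod_pair a k hp]
  simp [neg_pow]

/-- The running maximum of a Leja sequence is positive. -/
lemma leja_prod_pos (a : ℕ → ℂ) (ha : IsLejaSeq a) (n : ℕ) :
    0 < ∏ i ∈ Finset.range (n + 1), ‖a (n + 1) - a i‖ := by
  obtain ⟨z, hz1, hz2⟩ := exists_circle_avoid ((Finset.range (n + 1)).image a)
  calc (0:ℝ) < ∏ i ∈ Finset.range (n + 1), ‖z - a i‖ := by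
        apply Finset.prod_pos
        intro i hi
        apply norm_pos_iff.mpr
        apply sub_ne_zero.mpr
        intro hzi
        exact hz2 (Finset.mem_image.mpr ⟨i, hi, hzi.symm⟩)
  _ ≤ _ := ha.2 n z hz1

/-- Key structural fact: in a Leja sequence, odd-indexed points are antipodes of
their predecessors. -/
lemma leja_pair (a : ℕ → ℂ) (ha : IsLejaSeq a) : ∀ k, a (2 * k + 1) = -a (2 * k) := by
  intro k
  induction k using Nat.strong_induction_on with
  | _ k ih =>
  have hp : ∀ j < k, a (2 * j + 1) = -a (2 * j) := fun j hj => ih j hj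
  have habs := ha.1
  -- the product over the first 2k points evaluated at a (2k) (the maximum)
  set M := ∏ i ∈ Finset.range (2 * k), ‖a (2 * k) - a i‖ with hM
  have hMpos : 0 < M := by
    rcases Nat.eq_zero_or_pos k with rfl | hk
    · simp [hM]
    · obtain ⟨m, rfl⟩ : ∃ m, k = m + 1 := ⟨k - 1, by omega⟩
      have e : 2 * (m + 1) = 2 * m + 1 + 1 := by ring
      rw [hM, e]
      exact leja_prod_pos a ha (2 * m + 1)
  -- partial product at a (2k+1) is at most M
  have hpart : ∏ i ∈ Finset.range (2 * k), ‖a (2 * k + 1) - a i‖ ≤ M := by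
    rcases Nat.eq_zero_or_pos k with rfl | hk
    · simp [hM]
    · obtain ⟨m, rfl⟩ : ∃ m, k = m + 1 := ⟨k - 1, by omega⟩
      have e : 2 * (m + 1) = 2 * m + 1 + 1 := by ring
      rw [hM, e]
      exact ha.2 (2 * m + 1) (a (2 * m + 1 + 1 + 1)) (habs _)
  -- lower bound: value at -a(2k)
  have hlow : 2 * M ≤ ∏ i ∈ Finset.range (2 * k + 1), ‖a (2 * k + 1) - a i‖ := by
    have h := ha.2 (2 * k) (-(a (2 * k))) (by simpa using habs (2 * k))
    calc 2 * M = (∏ i ∈ Finset.range (2 * k), ‖-(a (2 * k)) - a i‖)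
          * ‖-(a (2 * k)) - a (2 * k)‖ := by
          rw [prod_neg a k hp, ← hM]
          have : ‖-(a (2 * k)) - a (2 * k)‖ = 2 := by
            have : -(a (2 * k)) - a (2 * k) = -(2 * a (2 * k)) := by ring
            rw [this, norm_neg, norm_mul, Complex.norm_two, habs, mul_one]
          rw [this]; ring
    _ = ∏ i ∈ Finset.range (2 * k + 1), ‖-(a (2 * k)) - a i‖ := by
          rw [Finset.prod_range_succ]
    _ ≤ _ := h
  -- upper bound
  have hd2 : ‖a (2 * k + 1) - a (2 * k)‖ ≤ 2 :=
    abs_sub_le_two_s5 (habs _) (habs _)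
  have hup : ∏ i ∈ Finset.range (2 * k + 1), ‖a (2 * k + 1) - a i‖
      = (∏ i ∈ Finset.range (2 * k), ‖a (2 * k + 1) - a i‖)
        * ‖a (2 * k + 1) - a (2 * k)‖ := Finset.prod_range_succ _ _
  have hdist : ‖a (2 * k + 1) - a (2 * k)‖ = 2 := by
    have hnn : 0 ≤ ‖a (2 * k + 1) - a (2 * k)‖ := norm_nonneg _
    have h1 : 2 * M ≤ M * ‖a (2 * k + 1) - a (2 * k)‖ := by
      calc 2 * M ≤ _ := hlow
      _ ≤ M * ‖a (2 * k + 1) - a (2 * k)‖ := by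
          rw [hup]
          exact mul_le_mul_of_nonneg_right hpart hnn
    nlinarith
  have := eq_neg_of_abs_sub_eq_two (habs (2 * k)) (habs (2 * k + 1))
    (by rwa [norm_sub_rev] at hdist)
  exact this

/-- Square roots exist on the circle. -/
lemma exists_sqrt_circle (u : ℂ) (hu : ‖u‖ = 1) :
    ∃ z : ℂ, ‖z‖ = 1 ∧ z ^ 2 = u := by
  obtain ⟨z, hz⟩ := IsAlgClosed.exists_pow_nat_eq u (n := 2) (by norm_num)
  refine ⟨z, ?_, hz⟩
  have h1 : ‖z‖ ^ 2 = 1 := by rw [← norm_pow, hz, hu]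
  have h2 : 0 ≤ ‖z‖ := norm_nonneg z
  nlinarith

/-- The squared even-indexed subsequence of a Leja sequence is a Leja sequence. -/
lemma leja_sq (a : ℕ → ℂ) (ha : IsLejaSeq a) :
    IsLejaSeq (fun k => a (2 * k) ^ 2) := by
  have hp : ∀ k, a (2 * k + 1) = -a (2 * k) := leja_pair a ha
  constructor
  · intro n
    simp only [norm_pow, ha.1, one_pow]
  · intro k u hu
    obtain ⟨y, hy1, hy2⟩ := exists_sqrt_circle u hu
    have key : ∀ w : ℂ, ∏ j ∈ Finset.range (k + 1), ‖w ^ 2 - a (2 * j) ^ 2‖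
        = ∏ i ∈ Finset.range (2 * (k + 1)), ‖w - a i‖ :=
      fun w => (prod_pair a (k + 1) (fun j _ => hp j) w).symm
    have e : 2 * (k + 1) = 2 * k + 1 + 1 := by ring
    simp only []
    calc ∏ j ∈ Finset.range (k + 1), ‖u - a (2 * j) ^ 2‖
        = ∏ i ∈ Finset.range (2 * (k + 1)), ‖y - a i‖ := by
          rw [← hy2, key]
    _ ≤ ∏ i ∈ Finset.range (2 * (k + 1)), ‖a (2 * (k + 1)) - a i‖ := by
          rw [e]
          exact ha.2 (2 * k + 1) y hy1
    _ = ∏ j ∈ Finset.range (k + 1), ‖a (2 * (k + 1)) ^ 2 - a (2 * j) ^ 2‖ :=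
          (key (a (2 * (k + 1)))).symm

lemma tau_two_mul (k : ℕ) (hk : k ≠ 0) : tau (2 * k) = tau k := by
  unfold tau
  rw [Nat.digits_def' (by norm_num : 1 < 2) (by omega)]
  simp [Nat.mul_div_cancel_left k (by norm_num : 0 < 2), Nat.mul_mod_right]

lemma tau_two_mul_add_one (k : ℕ) : tau (2 * k + 1) = tau k + 1 := by
  unfold tau
  rw [Nat.digits_def' (by norm_num : 1 < 2) (by omega)]
  have h1 : (2 * k + 1) % 2 = 1 := by omega
  have h2 : (2 * k + 1) / 2 = k := by omega
  rw [h1, h2]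
  simp [add_comm]

/-- Main product value: for a Leja sequence, `∏_{i<n} |a n - a i| = 2^{τ(n)}`. -/
lemma leja_prod_eq (n : ℕ) (hn : 1 ≤ n) : ∀ a : ℕ → ℂ, IsLejaSeq a →
    ∏ i ∈ Finset.range n, ‖a n - a i‖ = 2 ^ tau n := by
  induction n using Nat.strong_induction_on with
  | _ n ih =>
  intro a ha
  have habs := ha.1
  have hp : ∀ k, a (2 * k + 1) = -a (2 * k) := leja_pair a ha
  rcases Nat.even_or_odd n with ⟨k, hk⟩ | ⟨k, hk⟩
  · -- n = 2k, k ≥ 1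
    have hk1 : 1 ≤ k := by omega
    have hkn : k < n := by omega
    have hA := leja_sq a ha
    have e : n = 2 * k := by omega
    subst e
    have := ih k hkn hk1 (fun j => a (2 * j) ^ 2) hA
    calc ∏ i ∈ Finset.range (2 * k), ‖a (2 * k) - a i‖
        = ∏ j ∈ Finset.range k, ‖a (2 * k) ^ 2 - a (2 * j) ^ 2‖ :=
          prod_pair a k (fun j _ => hp j) (a (2 * k))
    _ = (2 : ℝ) ^ tau k := this
    _ = (2 : ℝ) ^ tau (2 * k) := by rw [tau_two_mul k (by omega)]
  · -- n = 2k + 1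
    have e : n = 2 * k + 1 := by omega
    subst e
    have hsplit : ∏ i ∈ Finset.range (2 * k + 1), ‖a (2 * k + 1) - a i‖
        = (∏ i ∈ Finset.range (2 * k), ‖a (2 * k + 1) - a i‖)
          * ‖a (2 * k + 1) - a (2 * k)‖ := Finset.prod_range_succ _ _
    have hlast : ‖a (2 * k + 1) - a (2 * k)‖ = 2 := by
      rw [hp k]
      have : -a (2 * k) - a (2 * k) = -(2 * a (2 * k)) := by ring
      rw [this, norm_neg, norm_mul, Complex.norm_two, habs, mul_one]
    have hpre : ∏ i ∈ Finset.range (2 * k), ‖a (2 * k + 1) - a i‖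
        = ∏ i ∈ Finset.range (2 * k), ‖a (2 * k) - a i‖ := by
      rw [hp k]
      exact prod_neg a k (fun j _ => hp j) (a (2 * k))
    rcases Nat.eq_zero_or_pos k with rfl | hk0
    · simp only [Nat.mul_zero, Nat.zero_add] at hsplit hlast ⊢
      rw [hsplit, hlast]
      norm_num [tau]
    · have h2k : 1 ≤ 2 * k := by omega
      have h2kn : 2 * k < 2 * k + 1 := by omega
      have hval := ih (2 * k) h2kn h2k a ha
      rw [hsplit, hpre, hlast, hval, tau_two_mul k (by omega), tau_two_mul_add_one]
      ring

/-- Points of a Leja sequence are pairwise distinct. -/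
lemma leja_ne (a : ℕ → ℂ) (ha : IsLejaSeq a) {i n : ℕ} (hi : i < n) : a n ≠ a i := by
  have h := leja_prod_eq n (by omega) a ha
  have hne : ∏ j ∈ Finset.range n, ‖a n - a j‖ ≠ 0 := by
    rw [h]; positivity
  intro hcontra
  apply hne
  apply Finset.prod_eq_zero (Finset.mem_range.mpr hi)
  rw [hcontra, sub_self, norm_zero]

lemma energy_formula (a : ℕ → ℂ) (ha : IsLejaSeq a) (N : ℕ) :
    logEnergy a N = -2 * Real.log 2 * ∑ k ∈ Finset.range N, (tau k : ℝ) := by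
  induction N with
  | zero => simp [logEnergy]
  | succ N ihN =>
    have habs := ha.1
    have hsym : ∀ i j : ℕ, (if i ≠ j then Real.log (1 / ‖a i - a j‖) else 0)
        = (if j ≠ i then Real.log (1 / ‖a j - a i‖) else 0) := by
      intro i j
      rw [norm_sub_rev]
      by_cases h : i = j <;> simp [h, Ne.symm]
    have hterm : ∀ i < N, (if i ≠ N then Real.log (1 / ‖a i - a N‖) else 0)
        = -Real.log (‖a N - a i‖) := by
      intro i hi
      rw [if_pos (by omega), norm_sub_rev, one_div, Real.log_inv]
    have hrowsum : ∑ i ∈ Finset.range N,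
        (if i ≠ N then Real.log (1 / ‖a i - a N‖) else 0)
        = -(tau N : ℝ) * Real.log 2 := by
      rcases Nat.eq_zero_or_pos N with rfl | hN0
      · simp [tau]
      · have hlog : ∑ i ∈ Finset.range N, -Real.log (‖a N - a i‖)
            = -Real.log (∏ i ∈ Finset.range N, ‖a N - a i‖) := by
          rw [Real.log_prod]
          · rw [Finset.sum_neg_distrib]
          · intro i hi
            have := leja_ne a ha (Finset.mem_range.mp hi)
            simpa [sub_eq_zero] using this
        rw [Finset.sum_congr rfl (fun i hi => hterm i (Finset.mem_range.mp hi)), hlog,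
          leja_prod_eq N hN0 a ha, Real.log_pow]
        ring
    unfold logEnergy at ihN ⊢
    rw [Finset.sum_range_succ]
    have hinner : ∀ i, ∑ j ∈ Finset.range (N + 1),
        (if i ≠ j then Real.log (1 / ‖a i - a j‖) else 0)
        = (∑ j ∈ Finset.range N, (if i ≠ j then Real.log (1 / ‖a i - a j‖) else 0))
          + (if i ≠ N then Real.log (1 / ‖a i - a N‖) else 0) :=
      fun i => Finset.sum_range_succ _ _
    rw [Finset.sum_congr rfl (fun i _ => hinner i), Finset.sum_add_distrib, ihN]
    have hlastrow : ∑ j ∈ Finset.range N,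
        (if N ≠ j then Real.log (1 / ‖a N - a j‖) else 0)
        = -(tau N : ℝ) * Real.log 2 := by
      rw [← hrowsum]
      exact Finset.sum_congr rfl (fun j _ => (hsym j N).symm)
    rw [Finset.sum_range_succ
        (fun j => if N ≠ j then Real.log (1 / ‖a N - a j‖) else 0) N,
      hlastrow, hrowsum, Finset.sum_range_succ (fun k => (tau k : ℝ)) N,
      if_neg (by simp : ¬ (N ≠ N))]
    ring

theorem leja_logEnergy_binary (a : ℕ → ℂ) (ha : IsLejaSeq a) (N : ℕ) (hN : 2 ≤ N) :
    logEnergy a N = -2 * Real.log 2 * ∑ k ∈ Finset.Icc 1 (N - 1), (tau k : ℝ) := by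
  rw [energy_formula a ha N]
  congr 1
  have h1 : Finset.Icc 1 (N - 1) = Finset.Ico 1 N := by
    ext x
    simp only [Finset.mem_Icc, Finset.mem_Ico]
    omega
  rw [h1, Finset.range_eq_Ico, ← Finset.sum_Ico_consecutive (fun k => (tau k : ℝ))
    (by omega : 0 ≤ 1) (by omega : 1 ≤ N)]
  have h0 : ∑ k ∈ Finset.Ico 0 1, (tau k : ℝ) = 0 := by
    simp [tau]
  rw [h0, zero_add]
end
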